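/- For every integer K ≥ 3, defining Ψ(K) = ∑_{ℓ₁=0}^{K−3} [(K−ℓ₁−1)(3ℓ₁²+ℓ₁−1)] / [2(K−ℓ₁)(4ℓ₁²−1)] · ∏_{ℓ₂=ℓ₁+1}^{K−2} ℓ₂/(2ℓ₂+1), the following strict inequalities hold: (3K/(2K−3))·Λ₃(K) < Ψ(K) < (3/2)·Γ₃(K) + (K−2)/(5(K−1)·2^K), where Γ₃(K) = ∑_{ℓ=0}^{K−3} (K−ℓ−1)/((K−ℓ)·2^{K−ℓ}) and Λ₃(K) = ∑_{ℓ=0}^{K−3} ℓ(K−ℓ−1)/(K(K−ℓ)·2^{K−ℓ}). -/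

import Mathlib

open Finset
private lemma f_nonneg (j : ℕ) : (0:ℝ) ≤ (j:ℝ)/(2*(j:ℝ)+1) := by positivity

private lemma f_le_half (j : ℕ) : (j:ℝ)/(2*(j:ℝ)+1) ≤ 1/2 := by
  rw [div_le_div_iff₀ (by positivity) (by norm_num)]
  linarith [Nat.cast_nonneg (α := ℝ) j]

private lemma prod_f_le (a b : ℕ) :
    (∏ j ∈ Icc a b, (j:ℝ)/(2*(j:ℝ)+1)) ≤ (1/2:ℝ)^(b+1-a) := by
  calc (∏ j ∈ Icc a b, (j:ℝ)/(2*(j:ℝ)+1)) ≤ ∏ _j ∈ Icc a b, (1/2:ℝ) :=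
        Finset.prod_le_prod (fun j _ => f_nonneg j) (fun j _ => f_le_half j)
    _ = (1/2:ℝ)^(b+1-a) := by rw [Finset.prod_const, Nat.card_Icc]

private lemma prod_split (a b : ℕ) (h : a ≤ b) (g : ℕ → ℝ) :
    (∏ j ∈ Icc a b, g j) = g a * ∏ j ∈ Icc (a+1) b, g j := by
  rw [Finset.Icc_eq_cons_Ioc h, Finset.prod_cons, Finset.Icc_add_one_left_eq_Ioc]

private lemma prod_f_le' (a b : ℕ) (h : a ≤ b) :
    (∏ j ∈ Icc a b, (j:ℝ)/(2*(j:ℝ)+1)) ≤ ((a:ℝ)/(2*(a:ℝ)+1)) * (1/2:ℝ)^(b-a) := by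
  rw [prod_split a b h]
  have h2 : b + 1 - (a+1) = b - a := by omega
  have h3 := prod_f_le (a+1) b
  rw [h2] at h3
  exact mul_le_mul_of_nonneg_left h3 (f_nonneg a)

private lemma prod_f_ge (n a : ℕ) (ha : 1 ≤ a) :
    (1/2:ℝ)^(n+1) * ((2*(a:ℝ)-1)/(2*(((a+n : ℕ)):ℝ)+1)) ≤
      ∏ j ∈ Icc a (a+n), (j:ℝ)/(2*(j:ℝ)+1) := by
  have ha' : (1:ℝ) ≤ (a:ℝ) := by exact_mod_cast ha
  induction n with
  | zero =>
      simp only [Nat.add_zero, Finset.Icc_self, Finset.prod_singleton, zero_add, pow_one]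
      rw [show (1/2:ℝ) * ((2*(a:ℝ)-1)/(2*(a:ℝ)+1)) = ((1/2)*(2*(a:ℝ)-1))/(2*(a:ℝ)+1) by ring]
      rw [div_le_div_iff₀ (by positivity) (by positivity)]
      nlinarith
  | succ n ih =>
      rw [show a + (n+1) = (a+n) + 1 from rfl,
          Finset.prod_Icc_succ_top (by omega : a ≤ a+n+1)]
      refine le_trans ?_ (mul_le_mul_of_nonneg_right ih (f_nonneg (a+n+1)))
      push_cast
      have ht : (0:ℝ) ≤ (n:ℝ) := Nat.cast_nonneg n
      have key : (1/2:ℝ)*((2*(a:ℝ)-1)/(2*((a:ℝ)+(n:ℝ)+1)+1)) ≤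
          ((2*(a:ℝ)-1)/(2*((a:ℝ)+(n:ℝ))+1))*(((a:ℝ)+(n:ℝ)+1)/(2*((a:ℝ)+(n:ℝ)+1)+1)) := by
        rw [div_mul_div_comm, div_mul_div_comm, div_le_div_iff₀ (by positivity) (by positivity)]
        nlinarith [mul_nonneg (by linarith : (0:ℝ) ≤ 2*(a:ℝ)-1)
          (by positivity : (0:ℝ) ≤ 2*((a:ℝ)+(n:ℝ)+1)+1)]
      calc (1/2:ℝ)^(n+1+1) * ((2*(a:ℝ)-1)/(2*((a:ℝ)+(n:ℝ)+1)+1))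
          = (1/2:ℝ)^(n+1) * ((1/2)*((2*(a:ℝ)-1)/(2*((a:ℝ)+(n:ℝ)+1)+1))) := by ring
        _ ≤ (1/2:ℝ)^(n+1) * (((2*(a:ℝ)-1)/(2*((a:ℝ)+(n:ℝ))+1))*(((a:ℝ)+(n:ℝ)+1)/(2*((a:ℝ)+(n:ℝ)+1)+1))) := by
            exact mul_le_mul_of_nonneg_left key (by positivity)
        _ = ((1/2:ℝ)^(n+1) * ((2*(a:ℝ)-1)/(2*((a:ℝ)+(n:ℝ))+1)))*(((a:ℝ)+(n:ℝ)+1)/(2*((a:ℝ)+(n:ℝ)+1)+1)) := by ring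

set_option maxHeartbeats 1000000 in
theorem stmt_7 (K : ℕ) (hK : 3 ≤ K) :
    (3 * (K : ℝ) / (2 * (K : ℝ) - 3)) *
      (∑ ℓ ∈ Finset.range (K - 3 + 1),
        (ℓ : ℝ) * ((K : ℝ) - ℓ - 1) / ((K : ℝ) * ((K : ℝ) - ℓ) * 2 ^ (K - ℓ)))
    < (∑ ℓ₁ ∈ Finset.range (K - 3 + 1),
        ((K : ℝ) - ℓ₁ - 1) * (3 * (ℓ₁ : ℝ) ^ 2 + ℓ₁ - 1) /
          (2 * ((K : ℝ) - ℓ₁) * (4 * (ℓ₁ : ℝ) ^ 2 - 1)) *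
        ∏ ℓ₂ ∈ Finset.Icc (ℓ₁ + 1) (K - 2), (ℓ₂ : ℝ) / (2 * ℓ₂ + 1))
    ∧ (∑ ℓ₁ ∈ Finset.range (K - 3 + 1),
        ((K : ℝ) - ℓ₁ - 1) * (3 * (ℓ₁ : ℝ) ^ 2 + ℓ₁ - 1) /
          (2 * ((K : ℝ) - ℓ₁) * (4 * (ℓ₁ : ℝ) ^ 2 - 1)) *
        ∏ ℓ₂ ∈ Finset.Icc (ℓ₁ + 1) (K - 2), (ℓ₂ : ℝ) / (2 * ℓ₂ + 1))
      < (3 / 2) *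
          (∑ ℓ ∈ Finset.range (K - 3 + 1),
            ((K : ℝ) - ℓ - 1) / (((K : ℝ) - ℓ) * 2 ^ (K - ℓ)))
        + ((K : ℝ) - 2) / (5 * ((K : ℝ) - 1) * 2 ^ K) := by
  have hxK : (3:ℝ) ≤ (K:ℝ) := by exact_mod_cast hK
  constructor
  · -- lower bound
    rw [Finset.mul_sum]
    refine Finset.sum_lt_sum_of_nonempty (Finset.nonempty_range_iff.mpr (by omega)) ?_
    intro ℓ hℓ
    rw [Finset.mem_range] at hℓ
    have hℓ3 : ℓ + 3 ≤ K := by omega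
    have hcast : (ℓ:ℝ) + 3 ≤ (K:ℝ) := by exact_mod_cast hℓ3
    have hxL : (0:ℝ) < (K:ℝ) - ℓ := by linarith [Nat.cast_nonneg (α := ℝ) ℓ]
    have hxL1 : (0:ℝ) < (K:ℝ) - ℓ - 1 := by linarith [Nat.cast_nonneg (α := ℝ) ℓ]
    have hx0 : (0:ℝ) < (K:ℝ) := by linarith
    have h2x3 : (0:ℝ) < 2*(K:ℝ) - 3 := by linarith
    rcases Nat.eq_zero_or_pos ℓ with h0 | h1
    · subst h0
      simp only [Nat.cast_zero, zero_mul, zero_div, mul_zero]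
      have hPpos : 0 < ∏ j ∈ Icc (0+1) (K-2), (j:ℝ)/(2*(j:ℝ)+1) := by
        apply Finset.prod_pos
        intro j hj
        have hj1 : 1 ≤ j := (Finset.mem_Icc.mp hj).1
        have hj1' : (1:ℝ) ≤ (j:ℝ) := by exact_mod_cast hj1
        exact div_pos (by linarith) (by linarith)
      refine mul_pos ?_ hPpos
      rw [div_pos_iff]
      right
      constructor <;> nlinarith
    · have hL1 : (1:ℝ) ≤ (ℓ:ℝ) := by exact_mod_cast h1
      have hab : ℓ + 1 + (K - 3 - ℓ) = K - 2 := by omega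
      have hPge := prod_f_ge (K - 3 - ℓ) (ℓ + 1) (by omega)
      rw [hab] at hPge
      rw [show K - 3 - ℓ + 1 = K - 2 - ℓ by omega] at hPge
      have hK2cast : ((K-2:ℕ):ℝ) = (K:ℝ) - 2 := by
        rw [Nat.cast_sub (by omega)]; norm_num
      rw [hK2cast] at hPge
      push_cast at hPge
      have h4L : (0:ℝ) < 4*(ℓ:ℝ)^2 - 1 := by nlinarith
      have h3L : (0:ℝ) < 3*(ℓ:ℝ)^2 + ℓ - 1 := by nlinarith
      have hCpos : (0:ℝ) ≤ ((K:ℝ) - ℓ - 1) * (3*(ℓ:ℝ)^2 + ℓ - 1) /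
          (2*((K:ℝ) - ℓ)*(4*(ℓ:ℝ)^2 - 1)) :=
        le_of_lt (div_pos (mul_pos hxL1 h3L)
          (mul_pos (mul_pos (by norm_num) hxL) h4L))
      refine lt_of_lt_of_le ?_ (mul_le_mul_of_nonneg_left hPge hCpos)
      have hhalf : ((1:ℝ)/2)^(K-2-ℓ) = 1/(2:ℝ)^(K-2-ℓ) := by
        rw [div_pow, one_pow]
      have hppos : (0:ℝ) < (2:ℝ)^(K-2-ℓ) := by positivity
      have hpow : (2:ℝ)^(K-ℓ) = (2:ℝ)^(K-2-ℓ) * 4 := by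
        rw [show K - ℓ = (K-2-ℓ) + 2 by omega, pow_add]; norm_num
      rw [hhalf, hpow]
      set p := (2:ℝ)^(K-2-ℓ) with hpdef
      set x := (K:ℝ) with hxdef
      set L := (ℓ:ℝ) with hLdef
      have hne1 : x ≠ 0 := ne_of_gt hx0
      have hne2 : x - L ≠ 0 := ne_of_gt hxL
      have hne3 : 2*x - 3 ≠ 0 := ne_of_gt h2x3
      have hne4 : p ≠ 0 := ne_of_gt hppos
      have hne5 : 4*L^2 - 1 ≠ 0 := by nlinarith
      have hne6 : 2*(x-2) + 1 ≠ 0 := by intro h; apply hne3; linarith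
      have e1 : 3*x/(2*x-3) * (L*(x-L-1)/(x*(x-L)*(p*4))) =
          ((x-L-1)/((x-L)*p*(2*x-3))) * (3*L/4) := by
        field_simp
      have e2 : (x-L-1)*(3*L^2+L-1)/(2*(x-L)*(4*L^2-1)) * (1/p * ((2*(L+1)-1)/(2*(x-2)+1))) =
          ((x-L-1)/((x-L)*p*(2*x-3))) * ((3*L^2+L-1)*(2*L+1)/(2*(4*L^2-1))) := by
        rw [show 2*(x-2)+1 = 2*x-3 by ring]
        field_simp
        ring
      rw [e1, e2]
      have hG : (0:ℝ) < (x-L-1)/((x-L)*p*(2*x-3)) :=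
        div_pos hxL1 (mul_pos (mul_pos hxL hppos) h2x3)
      refine mul_lt_mul_of_pos_left ?_ hG
      have h8 : (0:ℝ) < 2*(4*L^2-1) := by nlinarith
      rw [div_lt_div_iff₀ (by norm_num : (0:ℝ) < 4) h8]
      nlinarith [sq_nonneg (L-1)]
  · by_cases hK4 : K = 4
    · subst hK4
      norm_num [Finset.sum_range_succ, show Finset.Icc 1 2 = {1,2} by decide,
        show Finset.Icc 2 2 = {2} by decide, Finset.prod_insert, Finset.prod_singleton]
    · -- K = 3 or K ≥ 5
      have hslack : (0:ℝ) < ((K:ℝ)-2)/(5*((K:ℝ)-1)*2^K) :=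
        div_pos (by linarith) (mul_pos (mul_pos (by norm_num) (by linarith)) (by positivity))
      have hmain : (∑ ℓ₁ ∈ Finset.range (K - 3 + 1),
          ((K : ℝ) - ℓ₁ - 1) * (3 * (ℓ₁ : ℝ) ^ 2 + ℓ₁ - 1) /
            (2 * ((K : ℝ) - ℓ₁) * (4 * (ℓ₁ : ℝ) ^ 2 - 1)) *
          ∏ ℓ₂ ∈ Finset.Icc (ℓ₁ + 1) (K - 2), (ℓ₂ : ℝ) / (2 * ℓ₂ + 1))
          < (3 / 2) * (∑ ℓ ∈ Finset.range (K - 3 + 1),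
            ((K : ℝ) - ℓ - 1) / (((K : ℝ) - ℓ) * 2 ^ (K - ℓ))) := by
        rw [Finset.mul_sum]
        refine Finset.sum_lt_sum_of_nonempty (Finset.nonempty_range_iff.mpr (by omega)) ?_
        intro ℓ hℓ
        rw [Finset.mem_range] at hℓ
        have hℓ3 : ℓ + 3 ≤ K := by omega
        have hcast : (ℓ:ℝ) + 3 ≤ (K:ℝ) := by exact_mod_cast hℓ3
        have hxL : (0:ℝ) < (K:ℝ) - ℓ := by linarith [Nat.cast_nonneg (α := ℝ) ℓ]
        have hxL1 : (0:ℝ) < (K:ℝ) - ℓ - 1 := by linarith [Nat.cast_nonneg (α := ℝ) ℓ]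
        have hx0 : (0:ℝ) < (K:ℝ) := by linarith
        rcases Nat.lt_or_ge ℓ 2 with hsm | h2
        · interval_cases ℓ
          · -- ℓ = 0
            simp only [zero_add]
            set P := ∏ ℓ₂ ∈ Finset.Icc 1 (K-2), ((ℓ₂:ℝ)/(2*(ℓ₂:ℝ)+1)) with hPdef
            norm_num
            rw [show ((1:ℝ) - (K:ℝ)) / -(2*(K:ℝ)) = ((K:ℝ)-1)/(2*(K:ℝ)) by
              rw [show (1:ℝ)-(K:ℝ) = -((K:ℝ)-1) by ring, neg_div_neg_eq]]
            have hPle : P ≤ 1/3 * (1/2:ℝ)^(K-3) := by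
              rw [hPdef]
              have h := prod_f_le' 1 (K-2) (by omega)
              rw [show K-2-1 = K-3 by omega] at h
              refine le_trans h ?_
              norm_num
            have hA : (0:ℝ) ≤ ((K:ℝ)-1)/(2*(K:ℝ)) :=
              div_nonneg (by linarith) (by linarith)
            refine lt_of_le_of_lt (mul_le_mul_of_nonneg_left hPle hA) ?_
            have hppos : (0:ℝ) < (2:ℝ)^(K-3) := by positivity
            have hpow : (2:ℝ)^K = (2:ℝ)^(K-3) * 8 := by
              rw [show K = (K-3) + 3 by omega, pow_add]
              rw [show (K - 3 + 3) - 3 = K - 3 by omega]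
              norm_num
            have hhalf : ((1:ℝ)/2)^(K-3) = 1/(2:ℝ)^(K-3) := by rw [div_pow, one_pow]
            rw [hhalf, hpow]
            set q := (2:ℝ)^(K-3) with hqdef
            have hne1 : (K:ℝ) ≠ 0 := ne_of_gt hx0
            have hneq : q ≠ 0 := ne_of_gt hppos
            have e1 : ((K:ℝ)-1)/(2*(K:ℝ)) * (1/3 * (1/q)) =
                (((K:ℝ)-1)/((K:ℝ)*q)) * (1/6) := by
              field_simp
              ring_nf
            have e2 : 3/2 * (((K:ℝ)-1)/((K:ℝ)*(q*8))) =
                (((K:ℝ)-1)/((K:ℝ)*q)) * (3/16) := by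
              field_simp
              ring
            rw [e1, e2]
            refine mul_lt_mul_of_pos_left (by norm_num) ?_
            exact div_pos (by linarith) (mul_pos hx0 hppos)
          · -- ℓ = 1
            simp only [show (1:ℕ)+1 = 2 by norm_num]
            set P := ∏ ℓ₂ ∈ Finset.Icc 2 (K-2), ((ℓ₂:ℝ)/(2*(ℓ₂:ℝ)+1)) with hPdef
            norm_num
            push_cast at hxL hxL1
            have hK5 : 5 ≤ K := by omega
            have hK5' : (5:ℝ) ≤ (K:ℝ) := by exact_mod_cast hK5
            have hPle : P ≤ 2/5 * (3/7 * (1/2:ℝ)^(K-5)) := by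
              rw [hPdef, prod_split 2 (K-2) (by omega)]
              have h := prod_f_le' 3 (K-2) (by omega)
              rw [show K-2-3 = K-5 by omega] at h
              refine le_trans (mul_le_mul_of_nonneg_left h (by positivity)) ?_
              norm_num
            have hA : (0:ℝ) ≤ ((K:ℝ)-1-1)*3/(2*((K:ℝ)-1)*3) :=
              div_nonneg (by nlinarith) (by nlinarith)
            refine lt_of_le_of_lt (mul_le_mul_of_nonneg_left hPle hA) ?_
            have hppos : (0:ℝ) < (2:ℝ)^(K-5) := by positivity
            have hpow : (2:ℝ)^(K-1) = (2:ℝ)^(K-5) * 16 := by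
              rw [show K - 1 = (K-5) + 4 by omega, pow_add]
              norm_num
            have hhalf : ((1:ℝ)/2)^(K-5) = 1/(2:ℝ)^(K-5) := by rw [div_pow, one_pow]
            rw [hhalf, hpow]
            set q := (2:ℝ)^(K-5) with hqdef
            have hne1 : (K:ℝ) - 1 ≠ 0 := by intro h; nlinarith
            have hneq : q ≠ 0 := ne_of_gt hppos
            have e1 : ((K:ℝ)-1-1)*3/(2*((K:ℝ)-1)*3) * (2/5 * (3/7 * (1/q))) =
                (((K:ℝ)-1-1)/(((K:ℝ)-1)*q)) * (3/35) := by
              field_simp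
              ring
            have e2 : 3/2 * (((K:ℝ)-1-1)/(((K:ℝ)-1)*(q*16))) =
                (((K:ℝ)-1-1)/(((K:ℝ)-1)*q)) * (3/32) := by
              field_simp
              ring
            rw [e1, e2]
            refine mul_lt_mul_of_pos_left (by norm_num) ?_
            exact div_pos (by nlinarith) (mul_pos (by nlinarith) hppos)
        · -- ℓ ≥ 2
          have hL2 : (2:ℝ) ≤ (ℓ:ℝ) := by exact_mod_cast h2
          have hPle := prod_f_le' (ℓ+1) (K-2) (by omega)
          rw [show K - 2 - (ℓ+1) = K - 3 - ℓ by omega] at hPle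
          push_cast at hPle
          have h4L : (0:ℝ) < 4*(ℓ:ℝ)^2 - 1 := by nlinarith
          have h3L : (0:ℝ) < 3*(ℓ:ℝ)^2 + ℓ - 1 := by nlinarith
          have hCpos : (0:ℝ) ≤ ((K:ℝ) - ℓ - 1) * (3*(ℓ:ℝ)^2 + ℓ - 1) /
              (2*((K:ℝ) - ℓ)*(4*(ℓ:ℝ)^2 - 1)) :=
            le_of_lt (div_pos (mul_pos hxL1 h3L)
              (mul_pos (mul_pos (by norm_num) hxL) h4L))
          refine lt_of_le_of_lt (mul_le_mul_of_nonneg_left hPle hCpos) ?_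
          have hhalf : ((1:ℝ)/2)^(K-3-ℓ) = 1/(2:ℝ)^(K-3-ℓ) := by
            rw [div_pow, one_pow]
          have hppos : (0:ℝ) < (2:ℝ)^(K-3-ℓ) := by positivity
          have hpow : (2:ℝ)^(K-ℓ) = (2:ℝ)^(K-3-ℓ) * 8 := by
            rw [show K - ℓ = (K-3-ℓ) + 3 by omega, pow_add]; norm_num
          rw [hhalf, hpow]
          set p := (2:ℝ)^(K-3-ℓ) with hpdef
          set x := (K:ℝ) with hxdef
          set L := (ℓ:ℝ) with hLdef
          have hne2 : x - L ≠ 0 := ne_of_gt hxL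
          have hne4 : p ≠ 0 := ne_of_gt hppos
          have hne5 : 4*L^2 - 1 ≠ 0 := ne_of_gt h4L
          have hne6 : 2*(L+1) + 1 ≠ 0 := by nlinarith
          have e1 : (x-L-1)*(3*L^2+L-1)/(2*(x-L)*(4*L^2-1)) *
              ((L+1)/(2*(L+1)+1) * (1/p)) =
              ((x-L-1)/((x-L)*p)) * ((3*L^2+L-1)*(L+1)/(2*(4*L^2-1)*(2*(L+1)+1))) := by
            field_simp
          have e2 : 3/2 * ((x-L-1)/((x-L)*(p*8))) =
              ((x-L-1)/((x-L)*p)) * (3/16) := by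
            field_simp
            ring
          rw [e1, e2]
          have hG : (0:ℝ) < (x-L-1)/((x-L)*p) :=
            div_pos hxL1 (mul_pos hxL hppos)
          refine mul_lt_mul_of_pos_left ?_ hG
          have h8 : (0:ℝ) < 2*(4*L^2-1)*(2*(L+1)+1) := by nlinarith
          rw [div_lt_div_iff₀ h8 (by norm_num : (0:ℝ) < 16)]
          nlinarith [sq_nonneg (L-2)]
      linarith
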